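/- For all integers x with 0 ≤ x < 5 and y with 0 ≤ y < 8, the rational number 25/80 − (r₁·(5 − r₁))/10 − (r₂·(8 − r₂))/16 is not an integer, where r₁ is the residue of 5x modulo 5 and r₂ is the residue of 5y modulo 8. -/

import Mathlib

theorem riemann_roch_fails_q40 (x y : ℤ) (hx0 : 0 ≤ x) (hx : x < 5)
    (hy0 : 0 ≤ y) (hy : y < 8) :
    ¬ ∃ n : ℤ,
      (25 / 80 : ℚ) - (((5 * x) % 5 : ℤ) : ℚ) * (5 - (((5 * x) % 5 : ℤ) : ℚ)) / 10 -
        (((5 * y) % 8 : ℤ) : ℚ) * (8 - (((5 * y) % 8 : ℤ) : ℚ)) / 16 = (n : ℤ) := by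
  rintro ⟨n, hn⟩
  interval_cases x <;> interval_cases y <;>
    · norm_num at hn
      have h1 : ((n : ℤ) : ℚ).den = 1 := Rat.den_intCast n
      rw [← hn] at h1
      norm_num at h1
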